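/- Let n ≥ 2 and let {W(t)}_{t≥0} be a random sequence of column-stochastic n×n matrices, each of out-degree form, defined on a probability space. Suppose that almost surely {W(t)} has the directed infinite flow property and the associated sequence {ℓ_q} satisfies Σ_{q=1}^∞ 1/n^{ℓ_q} = ∞, and suppose there exists δ > 0 such that almost surely, for every t ≥ 0 there is t' ≥ t with y_i(t') ≥ δ for all i ∈ [n]. Then for the push-sum iterates, almost surely lim_{t→∞} |z_i(t+1) − x̄| = 0 for every i ∈ [n]. -/

import Mathlib

open Finset MeasureTheory

/-- `A_{S S̄} = ∑_{i ∈ S, j ∉ S} A i j`. -/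
def flowSum {n : ℕ} (A : Matrix (Fin n) (Fin n) ℝ) (S : Finset (Fin n)) : ℝ :=
  ∑ i ∈ S, ∑ j ∈ Sᶜ, A i j

/-- `S` is a nontrivial subset of `[n]`. -/
def NontrivialSubset {n : ℕ} (S : Finset (Fin n)) : Prop :=
  S.Nonempty ∧ S ≠ Finset.univ

/-- Directed infinite flow property: for every nontrivial `S`, `∑_t A_{S S̄}(t) = ∞`. -/
def DirectedInfiniteFlow {n : ℕ} (A : ℕ → Matrix (Fin n) (Fin n) ℝ) : Prop :=
  ∀ S : Finset (Fin n), NontrivialSubset S →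
    Filter.Tendsto (fun T => ∑ t ∈ Finset.range T, flowSum (A t) S)
      Filter.atTop Filter.atTop

/-- The backward product `A(t:s) = A(t) A(t-1) ⋯ A(s)`. -/
def matProd {n : ℕ} (A : ℕ → Matrix (Fin n) (Fin n) ℝ) (t s : ℕ) :
    Matrix (Fin n) (Fin n) ℝ :=
  (((List.range (t + 1 - s)).map fun k => A (t - k))).prod

/-- Row-stochastic nonnegative matrix. -/
def RowStochastic {n : ℕ} (A : Matrix (Fin n) (Fin n) ℝ) : Prop :=
  (∀ i j, 0 ≤ A i j) ∧ ∀ i, ∑ j, A i j = 1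

/-- Column-stochastic nonnegative matrix. -/
def ColStochastic {n : ℕ} (A : Matrix (Fin n) (Fin n) ℝ) : Prop :=
  (∀ i j, 0 ≤ A i j) ∧ ∀ j, ∑ i, A i j = 1

/-- `W` is the degree-normalized adjacency matrix of a digraph with all self-loops:
`W i j = 1 / (out-degree of j)` if there is an edge from `j` to `i`, else `0`. -/
def OutDegreeForm {n : ℕ} (W : Matrix (Fin n) (Fin n) ℝ) : Prop :=
  ∃ N : Fin n → Finset (Fin n), (∀ j, j ∈ N j) ∧
    ∀ i j, W i j = if i ∈ N j then (1 : ℝ) / (N j).card else 0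

/-- Strong aperiodicity of a sequence of matrices. -/
def StronglyAperiodic {n : ℕ} (A : ℕ → Matrix (Fin n) (Fin n) ℝ) : Prop :=
  ∃ γ : ℝ, 0 < γ ∧ ∀ t i, γ ≤ A t i i

/-- The times `k_q`: `k_0 = 0` and `k_q` is the least `t' > k_{q-1}` with
nonzero flow `∑_{t=k_{q-1}}^{t'-1} A_{S S̄}(t) > 0` across every nontrivial cut. -/
noncomputable def kSeq {n : ℕ} (A : ℕ → Matrix (Fin n) (Fin n) ℝ) : ℕ → ℕ
  | 0 => 0
  | q + 1 => sInf {t' : ℕ | kSeq A q < t' ∧ ∀ S : Finset (Fin n), NontrivialSubset S →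
      0 < ∑ t ∈ Finset.Ico (kSeq A q) t', flowSum (A t) S}

/-- `ℓ_q = k_{qn} - k_{(q-1)n}`. -/
noncomputable def ellSeq {n : ℕ} (A : ℕ → Matrix (Fin n) (Fin n) ℝ) (q : ℕ) : ℕ :=
  kSeq A (q * n) - kSeq A ((q - 1) * n)

/-- The index set `Q_{t,s} = {q ≥ 1 : s ≤ k_{(q-1)n}, k_{qn} ≤ t}` (as a `Finset`). -/
noncomputable def QSet {n : ℕ} (A : ℕ → Matrix (Fin n) (Fin n) ℝ) (t s : ℕ) :
    Finset ℕ :=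
  (Finset.Icc 1 t).filter fun q => s ≤ kSeq A ((q - 1) * n) ∧ kSeq A (q * n) ≤ t

/-- `Λ_{t,s} = ∏_{q ∈ Q_{t,s}} (1 - 1/n^{ℓ_q})`. -/
noncomputable def Lam {n : ℕ} (A : ℕ → Matrix (Fin n) (Fin n) ℝ) (t s : ℕ) : ℝ :=
  ∏ q ∈ QSet A t s, (1 - 1 / (n : ℝ) ^ (ellSeq A q))

/-- Push-sum iterates: `u(0) = u0`, `u(t+1) = W(t) u(t)`. -/
def pushIter {n : ℕ} (W : ℕ → Matrix (Fin n) (Fin n) ℝ) (u0 : Fin n → ℝ) : ℕ → Fin n → ℝ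
  | 0 => u0
  | t + 1 => (W t).mulVec (pushIter W u0 t)

/-- A nonnegative matrix is irreducible if the digraph with an edge from `j` to `i`
whenever `A i j > 0` is strongly connected. -/
def IrreducibleMat {n : ℕ} (A : Matrix (Fin n) (Fin n) ℝ) : Prop :=
  ∀ i j : Fin n, Relation.ReflTransGen (fun a b => 0 < A b a) i j


section PS
open Filter

variable {n : ℕ}

/-- Push-sum iterates started at time `a`. -/
def pushFrom (A : ℕ → Matrix (Fin n) (Fin n) ℝ) (a : ℕ) (u : Fin n → ℝ) : ℕ → Fin n → ℝ
  | 0 => u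
  | m + 1 => (A (a + m)).mulVec (pushFrom A a u m)

@[simp] lemma pushFrom_zero (A : ℕ → Matrix (Fin n) (Fin n) ℝ) (a : ℕ) (u : Fin n → ℝ) :
    pushFrom A a u 0 = u := rfl

lemma pushFrom_succ (A : ℕ → Matrix (Fin n) (Fin n) ℝ) (a : ℕ) (u : Fin n → ℝ) (m : ℕ) (i : Fin n) :
    pushFrom A a u (m + 1) i = ∑ j, A (a + m) i j * pushFrom A a u m j := by
  show (A (a + m)).mulVec _ i = _
  simp [Matrix.mulVec, dotProduct]

lemma pushIter_eq_pushFrom (A : ℕ → Matrix (Fin n) (Fin n) ℝ) (u : Fin n → ℝ) (t : ℕ) :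
    pushIter A u t = pushFrom A 0 u t := by
  induction t with
  | zero => rfl
  | succ t ih => show (A t).mulVec _ = (A (0 + t)).mulVec _; rw [ih, Nat.zero_add]

lemma pushFrom_shift (A : ℕ → Matrix (Fin n) (Fin n) ℝ) (u : Fin n → ℝ) (a m : ℕ) :
    pushFrom A 0 u (a + m) = pushFrom A a (pushFrom A 0 u a) m := by
  induction m with
  | zero => rfl
  | succ m ih =>
      show pushFrom A 0 u ((a + m) + 1) = (A (a + m)).mulVec _
      rw [show pushFrom A 0 u ((a+m)+1) = (A (0 + (a+m))).mulVec (pushFrom A 0 u (a+m)) from rfl,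
        Nat.zero_add, ih]

lemma pushFrom_sum (A : ℕ → Matrix (Fin n) (Fin n) ℝ)
    (hcol : ∀ t j, ∑ i, A t i j = 1) (a : ℕ) (u : Fin n → ℝ) (m : ℕ) :
    ∑ i, pushFrom A a u m i = ∑ i, u i := by
  induction m with
  | zero => rfl
  | succ m ih =>
      rw [← ih]
      simp only [pushFrom_succ]
      rw [Finset.sum_comm]
      congr 1; ext j
      rw [← Finset.sum_mul, hcol, one_mul]

lemma pushFrom_nonneg (A : ℕ → Matrix (Fin n) (Fin n) ℝ)
    (hnn : ∀ t i j, 0 ≤ A t i j) (a : ℕ) (u : Fin n → ℝ) (hu : ∀ i, 0 ≤ u i)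
    (m : ℕ) (i : Fin n) : 0 ≤ pushFrom A a u m i := by
  induction m generalizing i with
  | zero => exact hu i
  | succ m ih =>
      rw [pushFrom_succ]
      exact Finset.sum_nonneg fun k _ => mul_nonneg (hnn _ _ _) (ih k)

lemma pushFrom_linear (A : ℕ → Matrix (Fin n) (Fin n) ℝ) (a : ℕ) (u : Fin n → ℝ)
    (m : ℕ) (i : Fin n) :
    pushFrom A a u m i = ∑ k, u k * pushFrom A a (Pi.single k 1) m i := by
  induction m generalizing i with
  | zero =>
      simp only [pushFrom_zero]
      rw [Finset.sum_eq_single i]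
      · simp
      · intro k _ hk
        rw [Pi.single_apply, if_neg (Ne.symm hk), mul_zero]
      · simp
  | succ m ih =>
      rw [pushFrom_succ]
      simp only [pushFrom_succ]
      calc ∑ j, A (a+m) i j * pushFrom A a u m j
          = ∑ j, ∑ k, u k * (A (a+m) i j * pushFrom A a (Pi.single k 1) m j) := by
            refine Finset.sum_congr rfl fun j _ => ?_
            rw [ih j, Finset.mul_sum]
            exact Finset.sum_congr rfl fun k _ => by ring
        _ = ∑ k, ∑ j, u k * (A (a+m) i j * pushFrom A a (Pi.single k 1) m j) :=
            Finset.sum_comm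
        _ = ∑ k, u k * ∑ j, A (a+m) i j * pushFrom A a (Pi.single k 1) m j := by
            simp [Finset.mul_sum]

end PS
section PS2
open Filter

variable {n : ℕ} {A : ℕ → Matrix (Fin n) (Fin n) ℝ}

lemma pushFrom_quant (hnn : ∀ t i j, 0 ≤ A t i j)
    (hlow : ∀ t i j, A t i j ≠ 0 → 1 / (n:ℝ) ≤ A t i j)
    {a : ℕ} {u : Fin n → ℝ} (hu : ∀ i, 0 ≤ u i) (hu1 : ∀ i, u i = 0 ∨ 1 ≤ u i)
    (m : ℕ) (i : Fin n) :
    pushFrom A a u m i = 0 ∨ (1 / (n:ℝ)) ^ m ≤ pushFrom A a u m i := by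
  induction m generalizing i with
  | zero => simpa using hu1 i
  | succ m ih =>
      by_cases h : pushFrom A a u (m+1) i = 0
      · exact Or.inl h
      right
      rw [pushFrom_succ] at h ⊢
      have hterm : ∀ j, 0 ≤ A (a+m) i j * pushFrom A a u m j :=
        fun j => mul_nonneg (hnn _ _ _) (pushFrom_nonneg A hnn a u hu m j)
      obtain ⟨j, -, hj⟩ : ∃ j ∈ Finset.univ, A (a+m) i j * pushFrom A a u m j ≠ 0 := by
        by_contra hc
        push_neg at hc
        exact h (Finset.sum_eq_zero hc)
      have hA : A (a+m) i j ≠ 0 := fun h0 => hj (by rw [h0, zero_mul])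
      have hv : pushFrom A a u m j ≠ 0 := fun h0 => hj (by rw [h0, mul_zero])
      have h1 : (1/(n:ℝ))^m ≤ pushFrom A a u m j := (ih j).resolve_left hv
      have h2 : (1/(n:ℝ)) ≤ A (a+m) i j := hlow _ _ _ hA
      calc (1/(n:ℝ))^(m+1) = (1/(n:ℝ)) * (1/(n:ℝ))^m := by ring
        _ ≤ A (a+m) i j * pushFrom A a u m j := by
            apply mul_le_mul h2 h1 (by positivity)
            exact le_trans (by positivity) h2
        _ ≤ ∑ k, A (a+m) i k * pushFrom A a u m k :=
            Finset.single_le_sum (fun k _ => hterm k) (Finset.mem_univ j)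

lemma pushFrom_pos_mono (hnn : ∀ t i j, 0 ≤ A t i j)
    (hdiag : ∀ t j, 0 < A t j j)
    {a : ℕ} {u : Fin n → ℝ} (hu : ∀ i, 0 ≤ u i) {m m' : ℕ} (hm : m ≤ m') {i : Fin n}
    (h : 0 < pushFrom A a u m i) : 0 < pushFrom A a u m' i := by
  induction m' with
  | zero => rwa [Nat.le_zero.mp hm] at h
  | succ m' ih =>
      rcases Nat.lt_or_ge m (m'+1) with h' | h'
      · have hpos : 0 < pushFrom A a u m' i := ih (Nat.lt_succ_iff.mp h')
        rw [pushFrom_succ]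
        have : A (a+m') i i * pushFrom A a u m' i ≤ ∑ k, A (a+m') i k * pushFrom A a u m' k :=
          Finset.single_le_sum (f := fun k => A (a+m') i k * pushFrom A a u m' k)
            (fun k _ => mul_nonneg (hnn _ _ _) (pushFrom_nonneg A hnn a u hu m' k))
            (Finset.mem_univ i)
        exact lt_of_lt_of_le (mul_pos (hdiag _ _) hpos) this
      · rwa [le_antisymm hm h'] at h

lemma flowSum_nonneg (hnn : ∀ t i j, 0 ≤ A t i j) (t : ℕ) (S : Finset (Fin n)) :
    0 ≤ flowSum (A t) S :=
  Finset.sum_nonneg fun i _ => Finset.sum_nonneg fun j _ => hnn t i j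

lemma kSeq_succ_mem (hnn : ∀ t i j, 0 ≤ A t i j) (hflow : DirectedInfiniteFlow A) (q : ℕ) :
    kSeq A q < kSeq A (q+1) ∧ ∀ S : Finset (Fin n), NontrivialSubset S →
      0 < ∑ t ∈ Finset.Ico (kSeq A q) (kSeq A (q+1)), flowSum (A t) S := by
  set K := kSeq A q with hK
  have hex : ∀ S : Finset (Fin n), NontrivialSubset S →
      ∃ T, 0 < ∑ t ∈ Finset.Ico K T, flowSum (A t) S := by
    intro S hS
    have := (hflow S hS).eventually_ge_atTop (∑ t ∈ Finset.range K, flowSum (A t) S + 1)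
    obtain ⟨T0, hT0⟩ := this.exists_forall_of_atTop
    refine ⟨max T0 K, ?_⟩
    have hKT : K ≤ max T0 K := le_max_right _ _
    have := hT0 (max T0 K) (le_max_left _ _)
    rw [Finset.sum_Ico_eq_sub _ hKT]
    linarith
  classical
  set g : Finset (Fin n) → ℕ := fun S =>
    if h : NontrivialSubset S then (hex S h).choose else 0 with hg
  set T : ℕ := max ((Finset.univ : Finset (Finset (Fin n))).sup g) (K+1) with hT
  have hmem : T ∈ {t' : ℕ | K < t' ∧ ∀ S : Finset (Fin n), NontrivialSubset S →
      0 < ∑ t ∈ Finset.Ico K t', flowSum (A t) S} := by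
    constructor
    · exact lt_of_lt_of_le (Nat.lt_succ_self K) (le_max_right _ _)
    · intro S hS
      have h1 : 0 < ∑ t ∈ Finset.Ico K (g S), flowSum (A t) S := by
        rw [hg]; simp only [dif_pos hS]; exact (hex S hS).choose_spec
      refine lt_of_lt_of_le h1 ?_
      apply Finset.sum_le_sum_of_subset_of_nonneg
      · apply Finset.Ico_subset_Ico_right
        exact le_trans (Finset.le_sup (Finset.mem_univ S)) (le_max_left _ _)
      · intro t _ _; exact flowSum_nonneg hnn t S
  have : kSeq A (q+1) ∈ {t' : ℕ | K < t' ∧ ∀ S : Finset (Fin n), NontrivialSubset S →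
      0 < ∑ t ∈ Finset.Ico K t', flowSum (A t) S} := by
    rw [show kSeq A (q+1) = sInf {t' : ℕ | kSeq A q < t' ∧ ∀ S : Finset (Fin n),
      NontrivialSubset S → 0 < ∑ t ∈ Finset.Ico (kSeq A q) t', flowSum (A t) S} from rfl]
    exact Nat.sInf_mem ⟨T, hmem⟩
  exact this

lemma kSeq_lt (hnn : ∀ t i j, 0 ≤ A t i j) (hflow : DirectedInfiniteFlow A)
    {q q' : ℕ} (h : q < q') : kSeq A q < kSeq A q' := by
  induction q' with
  | zero => omega
  | succ q' ih =>
      rcases Nat.lt_or_ge q q' with h' | h'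
      · exact lt_trans (ih h') (kSeq_succ_mem hnn hflow q').1
      · rw [le_antisymm (Nat.lt_succ_iff.mp h) h']
        exact (kSeq_succ_mem hnn hflow q').1

lemma kSeq_le (hnn : ∀ t i j, 0 ≤ A t i j) (hflow : DirectedInfiniteFlow A)
    {q q' : ℕ} (h : q ≤ q') : kSeq A q ≤ kSeq A q' := by
  rcases Nat.lt_or_ge q q' with h' | h'
  · exact le_of_lt (kSeq_lt hnn hflow h')
  · rw [le_antisymm h h']

lemma self_le_kSeq (hnn : ∀ t i j, 0 ≤ A t i j) (hflow : DirectedInfiniteFlow A)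
    (q : ℕ) : q ≤ kSeq A q := by
  induction q with
  | zero => exact Nat.zero_le _
  | succ q ih => exact Nat.succ_le_of_lt (lt_of_le_of_lt ih (kSeq_succ_mem hnn hflow q).1)

end PS2
section PS3
open Filter
open scoped Classical

variable {n : ℕ} {A : ℕ → Matrix (Fin n) (Fin n) ℝ}

lemma single_nonneg' (j k : Fin n) : 0 ≤ (Pi.single j 1 : Fin n → ℝ) k := by
  rcases eq_or_ne k j with h | h
  · subst h; simp
  · simp [Pi.single_apply, h]

lemma single_zero_or_one (j k : Fin n) :
    (Pi.single j 1 : Fin n → ℝ) k = 0 ∨ 1 ≤ (Pi.single j 1 : Fin n → ℝ) k := by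
  rcases eq_or_ne k j with h | h
  · right; subst h; simp
  · left; simp [Pi.single_apply, h]

/-- Support of the `j`-th column of the product started at time `a`, after `m` steps. -/
noncomputable def Supp (A : ℕ → Matrix (Fin n) (Fin n) ℝ) (a : ℕ) (j : Fin n) (m : ℕ) :
    Finset (Fin n) :=
  Finset.univ.filter fun i => 0 < pushFrom A a (Pi.single j 1) m i

lemma supp_mono (hnn : ∀ t i j, 0 ≤ A t i j) (hdiag : ∀ t j, 0 < A t j j)
    {a : ℕ} {j : Fin n} {m m' : ℕ} (h : m ≤ m') : Supp A a j m ⊆ Supp A a j m' := by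
  intro i hi
  rw [Supp, Finset.mem_filter] at hi ⊢
  exact ⟨Finset.mem_univ i,
    pushFrom_pos_mono hnn hdiag (fun k => single_nonneg' j k) h hi.2⟩

lemma mem_supp_self (hnn : ∀ t i j, 0 ≤ A t i j) (hdiag : ∀ t j, 0 < A t j j)
    (a : ℕ) (j : Fin n) (m : ℕ) : j ∈ Supp A a j m := by
  rw [Supp, Finset.mem_filter]
  refine ⟨Finset.mem_univ j, ?_⟩
  have h0 : 0 < pushFrom A a (Pi.single j 1) 0 j := by simp
  exact pushFrom_pos_mono hnn hdiag (fun k => single_nonneg' j k)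
    (Nat.zero_le m) h0

lemma supp_grow (hnn : ∀ t i j, 0 ≤ A t i j) (hdiag : ∀ t j, 0 < A t j j)
    {a b c : ℕ} (hab : a ≤ b) (hbc : b ≤ c)
    (hcut : ∀ S : Finset (Fin n), NontrivialSubset S →
      0 < ∑ t ∈ Finset.Ico b c, flowSum (A t) S)
    (j : Fin n) (hne : Supp A a j (b - a) ≠ Finset.univ) :
    (Supp A a j (b - a)).card + 1 ≤ (Supp A a j (c - a)).card := by
  set S := Supp A a j (b - a) with hS
  have hSne : S.Nonempty := ⟨j, mem_supp_self hnn hdiag a j _⟩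
  have hScne : Sᶜ.Nonempty := by
    rw [← Finset.card_pos, Finset.card_compl]
    have : S.card < Fintype.card (Fin n) := by
      rcases lt_or_ge S.card (Fintype.card (Fin n)) with h | h
      · exact h
      · exact absurd (Finset.eq_univ_of_card S (le_antisymm (Finset.card_le_univ S)
          (by simpa using h))) hne
    omega
  have hScnu : Sᶜ ≠ Finset.univ := by
    intro h
    have : S = ∅ := by
      have := congrArg (·ᶜ) h
      simpa using this
    rw [this] at hSne
    exact Finset.not_nonempty_empty hSne
  have hpos := hcut Sᶜ ⟨hScne, hScnu⟩
  -- extract a positive entry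
  have h1 : ∃ t ∈ Finset.Ico b c, 0 < ∑ i ∈ Sᶜ, ∑ j' ∈ Sᶜᶜ, A t i j' := by
    by_contra hc
    push_neg at hc
    have : ∑ t ∈ Finset.Ico b c, ∑ i ∈ Sᶜ, ∑ j' ∈ Sᶜᶜ, A t i j' ≤ 0 :=
      Finset.sum_nonpos hc
    simp only [flowSum] at hpos
    linarith
  obtain ⟨t, ht, h1⟩ := h1
  have h2 : ∃ i ∈ Sᶜ, 0 < ∑ j' ∈ Sᶜᶜ, A t i j' := by
    by_contra hc
    push_neg at hc
    linarith [Finset.sum_nonpos hc]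
  obtain ⟨i, hi, h2⟩ := h2
  have h3 : ∃ j' ∈ Sᶜᶜ, 0 < A t i j' := by
    by_contra hc
    push_neg at hc
    linarith [Finset.sum_nonpos hc]
  obtain ⟨j', hj', h3⟩ := h3
  rw [compl_compl] at hj'
  rw [Finset.mem_compl] at hi
  rw [Finset.mem_Ico] at ht
  -- j' has positive value at time t, so i gets positive value at time t+1
  have hat : a ≤ t := le_trans hab ht.1
  have hvj' : 0 < pushFrom A a (Pi.single j 1) (t - a) j' := by
    have := (Finset.mem_filter.mp hj').2
    exact pushFrom_pos_mono hnn hdiag (fun k => single_nonneg' j k)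
      (by omega) this
  have hvi : 0 < pushFrom A a (Pi.single j 1) (t - a + 1) i := by
    rw [pushFrom_succ]
    have hterm : A (a + (t - a)) i j' * pushFrom A a (Pi.single j 1) (t - a) j' ≤
        ∑ k, A (a + (t - a)) i k * pushFrom A a (Pi.single j 1) (t - a) k :=
      Finset.single_le_sum (f := fun k => A (a + (t-a)) i k * pushFrom A a (Pi.single j 1) (t-a) k)
        (fun k _ => mul_nonneg (hnn _ _ _)
          (pushFrom_nonneg A hnn a _ (fun k => single_nonneg' j k) _ k))
        (Finset.mem_univ j')
    have hta : a + (t - a) = t := by omega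
    rw [hta] at hterm ⊢
    exact lt_of_lt_of_le (mul_pos h3 hvj') hterm
  have hiS : i ∈ Supp A a j (c - a) := by
    have : i ∈ Supp A a j (t - a + 1) := Finset.mem_filter.mpr ⟨Finset.mem_univ i, hvi⟩
    exact supp_mono hnn hdiag (by omega) this
  have hsub : S ⊂ Supp A a j (c - a) := by
    refine Finset.ssubset_iff_of_subset (supp_mono hnn hdiag (by omega)) |>.mpr ⟨i, hiS, hi⟩
  exact Finset.card_lt_card hsub

lemma window_supp (hn : 2 ≤ n) (hnn : ∀ t i j, 0 ≤ A t i j) (hdiag : ∀ t j, 0 < A t j j)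
    (hflow : DirectedInfiniteFlow A) (q0 : ℕ) (j : Fin n) :
    ∀ r : ℕ, min n (1 + r) ≤ (Supp A (kSeq A q0) j (kSeq A (q0 + r) - kSeq A q0)).card := by
  intro r
  induction r with
  | zero =>
      have : 0 < (Supp A (kSeq A q0) j (kSeq A (q0 + 0) - kSeq A q0)).card :=
        Finset.card_pos.mpr ⟨j, mem_supp_self hnn hdiag _ j _⟩
      omega
  | succ r ih =>
      set a := kSeq A q0
      have hab : a ≤ kSeq A (q0 + r) := kSeq_le hnn hflow (by omega)
      have hbc : kSeq A (q0 + r) ≤ kSeq A (q0 + r + 1) :=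
        le_of_lt (kSeq_succ_mem hnn hflow (q0 + r)).1
      by_cases hu : Supp A a j (kSeq A (q0 + r) - a) = Finset.univ
      · have : Supp A a j (kSeq A (q0 + r + 1) - a) = Finset.univ :=
          Finset.univ_subset_iff.mp (hu ▸ supp_mono hnn hdiag (by omega))
        rw [show q0 + (r+1) = q0 + r + 1 from rfl, this]
        simp
      · have hgrow := supp_grow hnn hdiag hab hbc (kSeq_succ_mem hnn hflow (q0 + r)).2 j hu
        have hcard : (Supp A a j (kSeq A (q0+r) - a)).card ≤ n := by
          simpa [Finset.card_univ] using
            Finset.card_le_univ (Supp A a j (kSeq A (q0+r) - a))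
        rw [show q0 + (r+1) = q0 + r + 1 from rfl]
        have hlt : (Supp A a j (kSeq A (q0+r) - a)).card < n := by
          by_contra h
          push_neg at h
          refine hu (Finset.eq_univ_of_card _ ?_)
          simp only [Fintype.card_fin]
          omega
        omega

lemma window_quant (hn : 2 ≤ n) (hnn : ∀ t i j, 0 ≤ A t i j)
    (hlow : ∀ t i j, A t i j ≠ 0 → 1 / (n:ℝ) ≤ A t i j)
    (hdiag : ∀ t j, 0 < A t j j) (hflow : DirectedInfiniteFlow A) (q0 : ℕ) (i j : Fin n) :
    (1 / (n:ℝ)) ^ (kSeq A (q0 + n) - kSeq A q0) ≤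
      pushFrom A (kSeq A q0) (Pi.single j 1) (kSeq A (q0 + n) - kSeq A q0) i := by
  have hsupp := window_supp hn hnn hdiag hflow q0 j n
  have : min n (1 + n) = n := by omega
  rw [this] at hsupp
  have hcard : (Supp A (kSeq A q0) j (kSeq A (q0 + n) - kSeq A q0)).card ≤ n := by
    simpa [Finset.card_univ] using
      Finset.card_le_univ (Supp A (kSeq A q0) j (kSeq A (q0 + n) - kSeq A q0))
  have huniv : Supp A (kSeq A q0) j (kSeq A (q0 + n) - kSeq A q0) = Finset.univ := by
    refine Finset.eq_univ_of_card _ ?_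
    simp only [Fintype.card_fin]
    omega
  have hi : i ∈ Supp A (kSeq A q0) j (kSeq A (q0 + n) - kSeq A q0) := huniv ▸ Finset.mem_univ i
  have hpos := (Finset.mem_filter.mp hi).2
  have := pushFrom_quant (a := kSeq A q0) (u := Pi.single j 1) hnn hlow (fun k => single_nonneg' j k)
    (fun k => single_zero_or_one j k)
    (kSeq A (q0 + n) - kSeq A q0) i
  rcases this with h | h
  · rw [h] at hpos; exact absurd hpos (lt_irrefl 0)
  · exact h

end PS3
section PS4
open Filter

variable {n : ℕ} {A : ℕ → Matrix (Fin n) (Fin n) ℝ}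

/-- ℓ¹ contraction for a column-stochastic kernel with entries `≥ ε`, applied to a
zero-sum vector. Here `v k` is the `k`-th column. -/
lemma l1_contract (v : Fin n → Fin n → ℝ) (ε : ℝ) (_hε : 0 ≤ ε)
    (hlowB : ∀ k i, ε ≤ v k i) (hcolB : ∀ k, ∑ i, v k i = 1)
    (u : Fin n → ℝ) (hu0 : ∑ k, u k = 0) :
    ∑ i, |∑ k, u k * v k i| ≤ (1 - n * ε) * ∑ k, |u k| := by
  have key : ∀ i, ∑ k, u k * v k i = ∑ k, u k * (v k i - ε) := by
    intro i
    simp only [mul_sub, Finset.sum_sub_distrib, ← Finset.sum_mul, hu0, zero_mul, sub_zero]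
  have habs : ∀ i, |∑ k, u k * v k i| ≤ ∑ k, |u k| * (v k i - ε) := by
    intro i
    rw [key i]
    refine le_trans (Finset.abs_sum_le_sum_abs _ _) ?_
    refine Finset.sum_le_sum fun k _ => ?_
    rw [abs_mul, abs_of_nonneg (sub_nonneg.mpr (hlowB k i))]
  calc ∑ i, |∑ k, u k * v k i| ≤ ∑ i, ∑ k, |u k| * (v k i - ε) :=
        Finset.sum_le_sum fun i _ => habs i
    _ = ∑ k, |u k| * (1 - n * ε) := by
        rw [Finset.sum_comm]
        refine Finset.sum_congr rfl fun k _ => ?_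
        rw [← Finset.mul_sum, Finset.sum_sub_distrib, hcolB k]
        simp [mul_comm]
    _ = (1 - n * ε) * ∑ k, |u k| := by rw [← Finset.sum_mul]; ring

/-- One-step non-expansiveness of the ℓ¹ norm. -/
lemma l1_step (hnn : ∀ t i j, 0 ≤ A t i j) (hcol : ∀ t j, ∑ i, A t i j = 1)
    (u : Fin n → ℝ) (hu0 : ∑ k, u k = 0) (t : ℕ) :
    ∑ i, |pushFrom A 0 u (t+1) i| ≤ ∑ i, |pushFrom A 0 u t i| := by
  have hsum : ∑ k, pushFrom A 0 u t k = 0 := by rw [pushFrom_sum A hcol]; exact hu0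
  have := l1_contract (fun k i => A (0+t) i k) 0 le_rfl
    (fun k i => hnn _ _ _) (fun k => hcol _ _) (pushFrom A 0 u t) hsum
  simp only [mul_zero, sub_zero, one_mul] at this
  refine le_trans (le_of_eq ?_) this
  refine Finset.sum_congr rfl fun i _ => ?_
  rw [pushFrom_succ]
  congr 1
  exact Finset.sum_congr rfl fun k _ => mul_comm _ _

lemma l1_antitone (hnn : ∀ t i j, 0 ≤ A t i j) (hcol : ∀ t j, ∑ i, A t i j = 1)
    (u : Fin n → ℝ) (hu0 : ∑ k, u k = 0) {t t' : ℕ} (h : t ≤ t') :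
    ∑ i, |pushFrom A 0 u t' i| ≤ ∑ i, |pushFrom A 0 u t i| := by
  induction t' with
  | zero => rw [Nat.le_zero.mp h]
  | succ t' ih =>
      rcases Nat.lt_or_ge t (t'+1) with h' | h'
      · exact le_trans (l1_step hnn hcol u hu0 t') (ih (Nat.lt_succ_iff.mp h'))
      · rw [le_antisymm h h']

lemma l1_window (hn : 2 ≤ n) (hnn : ∀ t i j, 0 ≤ A t i j)
    (hcol : ∀ t j, ∑ i, A t i j = 1)
    (hlow : ∀ t i j, A t i j ≠ 0 → 1 / (n:ℝ) ≤ A t i j)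
    (hdiag : ∀ t j, 0 < A t j j) (hflow : DirectedInfiniteFlow A)
    (u : Fin n → ℝ) (hu0 : ∑ k, u k = 0) (q0 : ℕ) :
    ∑ i, |pushFrom A 0 u (kSeq A (q0 + n)) i| ≤
      (1 - (1/(n:ℝ)) ^ (kSeq A (q0+n) - kSeq A q0)) * ∑ i, |pushFrom A 0 u (kSeq A q0) i| := by
  set a := kSeq A q0 with ha
  set ℓ := kSeq A (q0 + n) - a with hℓ
  have haℓ : kSeq A (q0 + n) = a + ℓ := by
    have : a ≤ kSeq A (q0 + n) := kSeq_le hnn hflow (by omega)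
    omega
  set w := pushFrom A 0 u a with hw
  have hw0 : ∑ k, w k = 0 := by rw [hw, pushFrom_sum A hcol]; exact hu0
  have hexp : ∀ i, pushFrom A 0 u (kSeq A (q0+n)) i
      = ∑ k, w k * pushFrom A a (Pi.single k 1) ℓ i := by
    intro i
    rw [haℓ, pushFrom_shift, ← hw, pushFrom_linear]
  set ε := (1/(n:ℝ)) ^ ℓ with hε
  have hεpos : 0 < ε := by
    apply pow_pos
    positivity
  have hlowB : ∀ k i, ε ≤ pushFrom A a (Pi.single k 1) ℓ i := fun k i =>
    window_quant hn hnn hlow hdiag hflow q0 i k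
  have hcolB : ∀ k, ∑ i, pushFrom A a (Pi.single k 1) ℓ i = 1 := by
    intro k
    rw [pushFrom_sum A hcol]
    simp
  have hcontract := l1_contract (fun k i => pushFrom A a (Pi.single k 1) ℓ i) ε
    (le_of_lt hεpos) hlowB hcolB w hw0
  have h1 : ∑ i, |pushFrom A 0 u (kSeq A (q0+n)) i| ≤ (1 - n * ε) * ∑ k, |w k| := by
    refine le_trans (le_of_eq ?_) hcontract
    exact Finset.sum_congr rfl fun i _ => by rw [hexp i]
  have h2 : (1 - (n:ℝ) * ε) ≤ 1 - ε := by
    have hn1 : (1:ℝ) ≤ n := by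
      have : (2:ℝ) ≤ n := by exact_mod_cast hn
      linarith
    nlinarith [hεpos]
  have h3 : (0:ℝ) ≤ ∑ k, |w k| := Finset.sum_nonneg fun k _ => abs_nonneg _
  calc ∑ i, |pushFrom A 0 u (kSeq A (q0+n)) i| ≤ (1 - n * ε) * ∑ k, |w k| := h1
    _ ≤ (1 - ε) * ∑ k, |w k| := mul_le_mul_of_nonneg_right h2 h3
    _ = (1 - ε) * ∑ i, |pushFrom A 0 u a i| := rfl

lemma l1_chain (hn : 2 ≤ n) (hnn : ∀ t i j, 0 ≤ A t i j)
    (hcol : ∀ t j, ∑ i, A t i j = 1)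
    (hlow : ∀ t i j, A t i j ≠ 0 → 1 / (n:ℝ) ≤ A t i j)
    (hdiag : ∀ t j, 0 < A t j j) (hflow : DirectedInfiniteFlow A)
    (u : Fin n → ℝ) (hu0 : ∑ k, u k = 0) (Q : ℕ) :
    ∑ i, |pushFrom A 0 u (kSeq A (Q * n)) i| ≤
      (∏ q ∈ Finset.Icc 1 Q, (1 - (1/(n:ℝ)) ^ (ellSeq A q))) * ∑ i, |u i| := by
  induction Q with
  | zero =>
      simp only [Nat.zero_mul]
      rw [show kSeq A 0 = 0 from rfl]
      simp
  | succ Q ih =>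
      have hfact : ∀ ℓ : ℕ, (0:ℝ) ≤ 1 - (1/(n:ℝ))^ℓ := by
        intro ℓ
        have h1 : (1/(n:ℝ)) ≤ 1 := by
          rw [div_le_one (by positivity)]
          exact_mod_cast le_trans (by norm_num) hn
        have := pow_le_one₀ (by positivity : (0:ℝ) ≤ 1/(n:ℝ)) h1 (n := ℓ)
        linarith
      have hstep := l1_window hn hnn hcol hlow hdiag hflow u hu0 (Q * n)
      rw [show Q * n + n = (Q+1) * n by ring] at hstep
      have hell : ellSeq A (Q+1) = kSeq A ((Q+1)*n) - kSeq A (Q*n) := rfl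
      rw [← hell] at hstep
      have hstep' : ∑ i, |pushFrom A 0 u (kSeq A ((Q+1) * n)) i| ≤
          (1 - (1/(n:ℝ)) ^ (ellSeq A (Q+1))) * ∑ i, |pushFrom A 0 u (kSeq A (Q * n)) i| := hstep
      calc ∑ i, |pushFrom A 0 u (kSeq A ((Q+1) * n)) i|
          ≤ (1 - (1/(n:ℝ)) ^ (ellSeq A (Q+1))) * ∑ i, |pushFrom A 0 u (kSeq A (Q * n)) i| := hstep'
        _ ≤ (1 - (1/(n:ℝ)) ^ (ellSeq A (Q+1))) *
            ((∏ q ∈ Finset.Icc 1 Q, (1 - (1/(n:ℝ)) ^ (ellSeq A q))) * ∑ i, |u i|) :=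
            mul_le_mul_of_nonneg_left ih (hfact _)
        _ = (∏ q ∈ Finset.Icc 1 (Q+1), (1 - (1/(n:ℝ)) ^ (ellSeq A q))) * ∑ i, |u i| := by
            rw [Finset.prod_Icc_succ_top (by omega)]
            ring

lemma l1_tendsto_zero (hn : 2 ≤ n) (hnn : ∀ t i j, 0 ≤ A t i j)
    (hcol : ∀ t j, ∑ i, A t i j = 1)
    (hlow : ∀ t i j, A t i j ≠ 0 → 1 / (n:ℝ) ≤ A t i j)
    (hdiag : ∀ t j, 0 < A t j j) (hflow : DirectedInfiniteFlow A)
    (hsum : Filter.Tendsto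
      (fun Q => ∑ q ∈ Finset.Icc 1 Q, 1 / (n : ℝ) ^ (ellSeq A q))
      Filter.atTop Filter.atTop)
    (u : Fin n → ℝ) (hu0 : ∑ k, u k = 0) :
    Filter.Tendsto (fun t => ∑ i, |pushFrom A 0 u t i|) Filter.atTop (nhds 0) := by
  have hfact : ∀ ℓ : ℕ, (0:ℝ) ≤ 1 - (1/(n:ℝ))^ℓ := by
    intro ℓ
    have h1 : (1/(n:ℝ)) ≤ 1 := by
      rw [div_le_one (by positivity)]
      exact_mod_cast le_trans (by norm_num) hn
    have := pow_le_one₀ (by positivity : (0:ℝ) ≤ 1/(n:ℝ)) h1 (n := ℓ)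
    linarith
  have hexpb : ∀ Q, (∏ q ∈ Finset.Icc 1 Q, (1 - (1/(n:ℝ)) ^ (ellSeq A q))) ≤
      Real.exp (-(∑ q ∈ Finset.Icc 1 Q, 1 / (n : ℝ) ^ (ellSeq A q))) := by
    intro Q
    calc ∏ q ∈ Finset.Icc 1 Q, (1 - (1/(n:ℝ)) ^ (ellSeq A q))
        ≤ ∏ q ∈ Finset.Icc 1 Q, Real.exp (-(1 / (n:ℝ) ^ (ellSeq A q))) := by
          refine Finset.prod_le_prod (fun q _ => hfact _) (fun q _ => ?_)
          have h := Real.add_one_le_exp (-(1 / (n:ℝ) ^ (ellSeq A q)))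
          rw [one_div_pow]
          linarith
      _ = Real.exp (∑ q ∈ Finset.Icc 1 Q, -(1 / (n:ℝ) ^ (ellSeq A q))) :=
          (Real.exp_sum _ _).symm
      _ = Real.exp (-(∑ q ∈ Finset.Icc 1 Q, 1 / (n:ℝ) ^ (ellSeq A q))) := by
          rw [Finset.sum_neg_distrib]
  have hb : Filter.Tendsto
      (fun Q => Real.exp (-(∑ q ∈ Finset.Icc 1 Q, 1 / (n:ℝ) ^ (ellSeq A q))) * ∑ i, |u i|)
      Filter.atTop (nhds 0) := by
    have h1 : Filter.Tendsto (fun Q => -(∑ q ∈ Finset.Icc 1 Q, 1 / (n:ℝ) ^ (ellSeq A q)))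
        Filter.atTop Filter.atBot := Filter.tendsto_neg_atBot_iff.mpr hsum
    have h2 := (Real.tendsto_exp_atBot.comp h1).mul_const (∑ i, |u i|)
    rwa [zero_mul] at h2
  have hnonneg : ∀ t, 0 ≤ ∑ i, |pushFrom A 0 u t i| :=
    fun t => Finset.sum_nonneg fun i _ => abs_nonneg _
  rw [Metric.tendsto_atTop]
  intro ε hεp
  obtain ⟨Q, hQ⟩ := (hb.eventually (gt_mem_nhds hεp)).exists
  refine ⟨kSeq A (Q * n), fun t ht => ?_⟩
  rw [Real.dist_eq, sub_zero, abs_of_nonneg (hnonneg t)]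
  calc ∑ i, |pushFrom A 0 u t i| ≤ ∑ i, |pushFrom A 0 u (kSeq A (Q*n)) i| :=
        l1_antitone hnn hcol u hu0 ht
    _ ≤ (∏ q ∈ Finset.Icc 1 Q, (1 - (1/(n:ℝ)) ^ (ellSeq A q))) * ∑ i, |u i| :=
        l1_chain hn hnn hcol hlow hdiag hflow u hu0 Q
    _ ≤ Real.exp (-(∑ q ∈ Finset.Icc 1 Q, 1 / (n:ℝ) ^ (ellSeq A q))) * ∑ i, |u i| :=
        mul_le_mul_of_nonneg_right (hexpb Q) (Finset.sum_nonneg fun i _ => abs_nonneg _)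
    _ < ε := hQ

end PS4
section PS5
open Filter

variable {n : ℕ} {A : ℕ → Matrix (Fin n) (Fin n) ℝ}

lemma pushFrom_sub_smul (A : ℕ → Matrix (Fin n) (Fin n) ℝ) (a : ℕ) (u v : Fin n → ℝ)
    (c : ℝ) (m : ℕ) (i : Fin n) :
    pushFrom A a (fun k => u k - c * v k) m i
      = pushFrom A a u m i - c * pushFrom A a v m i := by
  induction m generalizing i with
  | zero => rfl
  | succ m ih =>
      simp only [pushFrom_succ]
      rw [Finset.mul_sum, ← Finset.sum_sub_distrib]
      refine Finset.sum_congr rfl fun j _ => ?_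
      rw [ih j]
      ring

theorem main_det (hn : 2 ≤ n)
    (hnn : ∀ t i j, 0 ≤ A t i j) (hcol : ∀ t j, ∑ i, A t i j = 1)
    (hlow : ∀ t i j, A t i j ≠ 0 → 1 / (n:ℝ) ≤ A t i j)
    (hdiag : ∀ t j, 0 < A t j j) (hflow : DirectedInfiniteFlow A)
    (hsum : Filter.Tendsto
      (fun Q => ∑ q ∈ Finset.Icc 1 Q, 1 / (n : ℝ) ^ (ellSeq A q))
      Filter.atTop Filter.atTop)
    {δ : ℝ} (hδ : 0 < δ)
    (hy : ∀ t : ℕ, ∃ t', t ≤ t' ∧ ∀ i, δ ≤ pushFrom A 0 (fun _ => 1) t' i)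
    (x0 : Fin n → ℝ) (i : Fin n) :
    Filter.Tendsto
      (fun t => |pushFrom A 0 x0 (t + 1) i
          / pushFrom A 0 (fun _ => 1) (t + 1) i - (∑ j, x0 j) / n|)
      Filter.atTop (nhds 0) := by
  have hnR : (0:ℝ) < n := by positivity
  set x : ℕ → Fin n → ℝ := pushFrom A 0 x0 with hx
  set y : ℕ → Fin n → ℝ := pushFrom A 0 (fun _ => 1) with hy1
  set xbar : ℝ := (∑ j, x0 j) / n with hxbar
  have hone : ∀ k : Fin n, (0:ℝ) ≤ (fun _ : Fin n => (1:ℝ)) k := fun k => zero_le_one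
  have ypos : ∀ t k, 0 < y t k := by
    intro t k
    have h0 : 0 < pushFrom A 0 (fun _ => (1:ℝ)) 0 k := by norm_num
    exact pushFrom_pos_mono hnn hdiag hone (Nat.zero_le t) h0
  have ysum : ∀ t, ∑ k, y t k = n := by
    intro t
    rw [hy1, pushFrom_sum A hcol]
    simp
  have xsum : ∀ t, ∑ k, x t k = ∑ j, x0 j := fun t => pushFrom_sum A hcol 0 x0 t
  -- the difference d t = x t - xbar * y t tends to 0 in ℓ¹
  set d : ℕ → Fin n → ℝ := fun t k => x t k - xbar * y t k with hd
  have hdpush : ∀ t k, d t k = pushFrom A 0 (fun k => x0 k - xbar * 1) t k := by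
    intro t k
    rw [pushFrom_sub_smul]
  have hu0 : ∑ k, (x0 k - xbar * 1) = 0 := by
    rw [Finset.sum_sub_distrib]
    simp only [mul_one, Finset.sum_const, Finset.card_univ, Fintype.card_fin, nsmul_eq_mul]
    have hn0 : (n:ℝ) ≠ 0 := ne_of_gt hnR
    rw [hxbar]
    field_simp
    ring
  have hD : Filter.Tendsto (fun t => ∑ k, |d t k|) Filter.atTop (nhds 0) := by
    have := l1_tendsto_zero hn hnn hcol hlow hdiag hflow hsum _ hu0
    refine this.congr fun t => ?_
    exact Finset.sum_congr rfl fun k _ => by rw [← hdpush t k]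
  -- z, max and min
  have hne : (Finset.univ : Finset (Fin n)).Nonempty := ⟨i, Finset.mem_univ i⟩
  set z : ℕ → Fin n → ℝ := fun t k => x t k / y t k with hz
  set M : ℕ → ℝ := fun t => Finset.univ.sup' hne (z t) with hM
  set m : ℕ → ℝ := fun t => Finset.univ.inf' hne (z t) with hm
  have hxzy : ∀ t k, x t k = z t k * y t k := by
    intro t k
    show x t k = x t k / y t k * y t k
    rw [div_mul_cancel₀ _ (ne_of_gt (ypos t k))]
  have hstepM : ∀ t k, z (t+1) k ≤ M t := by
    intro t k
    have hxb : x (t+1) k ≤ M t * y (t+1) k := by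
      have h1 : ∀ j, x (t+1) j = ∑ l, A t j l * x t l := by
        intro j; rw [hx]; rw [show pushFrom A 0 x0 (t+1) j = ∑ l, A (0+t) j l *
          pushFrom A 0 x0 t l from pushFrom_succ A 0 x0 t j, Nat.zero_add]
      have h2 : ∀ j, y (t+1) j = ∑ l, A t j l * y t l := by
        intro j; rw [hy1]; rw [show pushFrom A 0 (fun _ => (1:ℝ)) (t+1) j = ∑ l, A (0+t) j l *
          pushFrom A 0 (fun _ => (1:ℝ)) t l from pushFrom_succ A 0 _ t j, Nat.zero_add]
      rw [h1, h2, Finset.mul_sum]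
      refine Finset.sum_le_sum fun l _ => ?_
      rw [hxzy t l]
      have hzM : z t l ≤ M t := Finset.le_sup' (z t) (Finset.mem_univ l)
      calc A t k l * (z t l * y t l) ≤ A t k l * (M t * y t l) := by
            apply mul_le_mul_of_nonneg_left _ (hnn _ _ _)
            exact mul_le_mul_of_nonneg_right hzM (le_of_lt (ypos t l))
        _ = M t * (A t k l * y t l) := by ring
    rw [hz, div_le_iff₀ (ypos (t+1) k)]
    exact hxb
  have hstepm : ∀ t k, m t ≤ z (t+1) k := by
    intro t k
    have hxb : m t * y (t+1) k ≤ x (t+1) k := by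
      have h1 : ∀ j, x (t+1) j = ∑ l, A t j l * x t l := by
        intro j; rw [hx]; rw [show pushFrom A 0 x0 (t+1) j = ∑ l, A (0+t) j l *
          pushFrom A 0 x0 t l from pushFrom_succ A 0 x0 t j, Nat.zero_add]
      have h2 : ∀ j, y (t+1) j = ∑ l, A t j l * y t l := by
        intro j; rw [hy1]; rw [show pushFrom A 0 (fun _ => (1:ℝ)) (t+1) j = ∑ l, A (0+t) j l *
          pushFrom A 0 (fun _ => (1:ℝ)) t l from pushFrom_succ A 0 _ t j, Nat.zero_add]
      rw [h1, h2, Finset.mul_sum]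
      refine Finset.sum_le_sum fun l _ => ?_
      rw [hxzy t l]
      have hzm : m t ≤ z t l := Finset.inf'_le (z t) (Finset.mem_univ l)
      calc m t * (A t k l * y t l) = A t k l * (m t * y t l) := by ring
        _ ≤ A t k l * (z t l * y t l) := by
            apply mul_le_mul_of_nonneg_left _ (hnn _ _ _)
            exact mul_le_mul_of_nonneg_right hzm (le_of_lt (ypos t l))
  -- (continued below)
    rw [hz, le_div_iff₀ (ypos (t+1) k)]
    exact hxb
  have hMstep : ∀ t, M (t+1) ≤ M t := fun t =>
    Finset.sup'_le hne (z (t+1)) fun k _ => hstepM t k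
  have hmstep : ∀ t, m t ≤ m (t+1) := fun t =>
    Finset.le_inf' hne (z (t+1)) fun k _ => hstepm t k
  have hManti : ∀ {t t'}, t ≤ t' → M t' ≤ M t := by
    intro t t' h
    induction t' with
    | zero => rw [Nat.le_zero.mp h]
    | succ t' ih =>
        rcases Nat.lt_or_ge t (t'+1) with h' | h'
        · exact le_trans (hMstep t') (ih (Nat.lt_succ_iff.mp h'))
        · rw [le_antisymm h h']
  have hmmono : ∀ {t t'}, t ≤ t' → m t ≤ m t' := by
    intro t t' h
    induction t' with
    | zero => rw [Nat.le_zero.mp h]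
    | succ t' ih =>
        rcases Nat.lt_or_ge t (t'+1) with h' | h'
        · exact le_trans (ih (Nat.lt_succ_iff.mp h')) (hmstep t')
        · rw [le_antisymm h h']
  have hxbarM : ∀ t, xbar ≤ M t := by
    intro t
    have h1 : ∑ k, x t k ≤ M t * n := by
      rw [← ysum t, Finset.mul_sum]
      refine Finset.sum_le_sum fun k _ => ?_
      rw [hxzy t k]
      exact mul_le_mul_of_nonneg_right (Finset.le_sup' (z t) (Finset.mem_univ k))
        (le_of_lt (ypos t k))
    rw [xsum t] at h1
    rw [hxbar, div_le_iff₀ hnR]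
    linarith [h1]
  have hxbarm : ∀ t, m t ≤ xbar := by
    intro t
    have h1 : m t * n ≤ ∑ k, x t k := by
      rw [← ysum t, Finset.mul_sum]
      refine Finset.sum_le_sum fun k _ => ?_
      rw [hxzy t k]
      exact mul_le_mul_of_nonneg_right (Finset.inf'_le (z t) (Finset.mem_univ k))
        (le_of_lt (ypos t k))
    rw [xsum t] at h1
    rw [hxbar, le_div_iff₀ hnR]
    linarith [h1]
  have hzdev : ∀ t k, |z t k - xbar| ≤ M t - m t := by
    intro t k
    have h1 : z t k ≤ M t := Finset.le_sup' (z t) (Finset.mem_univ k)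
    have h2 : m t ≤ z t k := Finset.inf'_le (z t) (Finset.mem_univ k)
    rw [abs_le]
    constructor
    · linarith [hxbarM t]
    · linarith [hxbarm t]
  -- z deviation at δ-times
  have hzd : ∀ t k, δ ≤ y t k → |z t k - xbar| ≤ (∑ l, |d t l|) / δ := by
    intro t k hyk
    have heq : z t k - xbar = d t k / y t k := by
      have hy0 : y t k ≠ 0 := ne_of_gt (ypos t k)
      show x t k / y t k - xbar = (x t k - xbar * y t k) / y t k
      field_simp
    rw [heq, abs_div, abs_of_pos (ypos t k)]
    have h1 : |d t k| ≤ ∑ l, |d t l| :=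
      Finset.single_le_sum (f := fun l => |d t l|) (fun l _ => abs_nonneg _)
        (Finset.mem_univ k)
    exact div_le_div₀ (Finset.sum_nonneg fun l _ => abs_nonneg _) h1 hδ hyk
  -- span bound at δ-times
  have hspan : ∀ t, (∀ k, δ ≤ y t k) → M t - m t ≤ 2 * (∑ l, |d t l|) / δ := by
    intro t hyt
    obtain ⟨kM, -, hkM⟩ := Finset.exists_mem_eq_sup' hne (z t)
    obtain ⟨km, -, hkm⟩ := Finset.exists_mem_eq_inf' hne (z t)
    have h1 : M t - xbar ≤ (∑ l, |d t l|) / δ := by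
      have hb := hzd t kM (hyt kM)
      have habs : z t kM - xbar ≤ |z t kM - xbar| := le_abs_self _
      have hMe : M t = z t kM := hkM
      linarith
    have h2 : xbar - m t ≤ (∑ l, |d t l|) / δ := by
      have hb := hzd t km (hyt km)
      have habs : -(z t km - xbar) ≤ |z t km - xbar| := neg_le_abs _
      have hme : m t = z t km := hkm
      linarith
    have : M t - m t = (M t - xbar) + (xbar - m t) := by ring
    rw [this, two_mul, add_div]
    exact add_le_add h1 h2
  -- final convergence
  rw [Metric.tendsto_atTop]
  intro ε hεp
  have hc : 0 < δ * ε / 4 := by positivity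
  obtain ⟨T0, hT0⟩ := (Metric.tendsto_atTop.mp hD) (δ * ε / 4) hc
  obtain ⟨t', ht'1, ht'2⟩ := hy T0
  refine ⟨t', fun t ht => ?_⟩
  have hdt' : ∑ l, |d t' l| < δ * ε / 4 := by
    have := hT0 t' ht'1
    rw [Real.dist_eq, sub_zero, abs_of_nonneg (Finset.sum_nonneg fun l _ => abs_nonneg _)] at this
    exact this
  have hspan' : M t' - m t' ≤ 2 * (∑ l, |d t' l|) / δ := hspan t' ht'2
  have hspanlt : M t' - m t' < ε / 2 := by
    have h2 : 2 * (∑ l, |d t' l|) / δ < ε / 2 := by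
      rw [div_lt_iff₀ hδ]
      nlinarith [hdt']
    linarith
  have hspan2 : M (t+1) - m (t+1) ≤ M t' - m t' := by
    have h1 : M (t+1) ≤ M t' := hManti (by omega)
    have h2 : m t' ≤ m (t+1) := hmmono (by omega)
    linarith
  have hfin : |z (t+1) i - xbar| < ε := by
    have := hzdev (t+1) i
    calc |z (t+1) i - xbar| ≤ M (t+1) - m (t+1) := this
      _ ≤ M t' - m t' := hspan2
      _ < ε / 2 := hspanlt
      _ < ε := by linarith
  rw [Real.dist_eq, sub_zero, abs_abs]
  exact hfin

end PS5

/-- Almost sure convergence of push-sum: if a.s. the random sequence has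
the directed infinite flow property and `∑_q 1/n^{ℓ_q} = ∞`, and a.s. the `y`-iterates
return above some fixed `δ > 0` infinitely often, then a.s. `z_i(t+1) → x̄`. -/
theorem pushsum_converges_as {n : ℕ} (hn : 2 ≤ n)
    {Ω : Type*} [MeasurableSpace Ω] (μ : MeasureTheory.Measure Ω)
    [MeasureTheory.IsProbabilityMeasure μ]
    (W : ℕ → Ω → Matrix (Fin n) (Fin n) ℝ)
    (hmeas : ∀ t i j, Measurable fun ω => W t ω i j)
    (hCS : ∀ t ω, ColStochastic (W t ω))
    (hOD : ∀ t ω, OutDegreeForm (W t ω))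
    (hflow : ∀ᵐ ω ∂μ, DirectedInfiniteFlow (fun t => W t ω))
    (hsum : ∀ᵐ ω ∂μ, Filter.Tendsto
      (fun Q => ∑ q ∈ Finset.Icc 1 Q, 1 / (n : ℝ) ^ (ellSeq (fun t => W t ω) q))
      Filter.atTop Filter.atTop)
    (δ : ℝ) (hδ : 0 < δ)
    (hy : ∀ᵐ ω ∂μ, ∀ t : ℕ, ∃ t', t ≤ t' ∧
      ∀ i, δ ≤ pushIter (fun s => W s ω) (fun _ => 1) t' i)
    (x0 : Fin n → ℝ) :
    ∀ᵐ ω ∂μ, ∀ i : Fin n, Filter.Tendsto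
      (fun t => |pushIter (fun s => W s ω) x0 (t + 1) i
          / pushIter (fun s => W s ω) (fun _ => 1) (t + 1) i - (∑ j, x0 j) / n|)
      Filter.atTop (nhds 0) := by
  have key : ∀ ω, (DirectedInfiniteFlow (fun t => W t ω)) →
      (Filter.Tendsto
        (fun Q => ∑ q ∈ Finset.Icc 1 Q, 1 / (n : ℝ) ^ (ellSeq (fun t => W t ω) q))
        Filter.atTop Filter.atTop) →
      (∀ t : ℕ, ∃ t', t ≤ t' ∧
        ∀ i, δ ≤ pushIter (fun s => W s ω) (fun _ => 1) t' i) →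
      ∀ i : Fin n, Filter.Tendsto
        (fun t => |pushIter (fun s => W s ω) x0 (t + 1) i
            / pushIter (fun s => W s ω) (fun _ => 1) (t + 1) i - (∑ j, x0 j) / n|)
        Filter.atTop (nhds 0) := by
    intro ω h1 h2 h3 i
    set A : ℕ → Matrix (Fin n) (Fin n) ℝ := fun t => W t ω with hA
    have hnn : ∀ t i j, 0 ≤ A t i j := fun t => (hCS t ω).1
    have hcol : ∀ t j, ∑ i, A t i j = 1 := fun t => (hCS t ω).2
    have hlow : ∀ t i j, A t i j ≠ 0 → 1 / (n:ℝ) ≤ A t i j := by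
      intro t i j hne
      obtain ⟨N, hself, hform⟩ := hOD t ω
      have he : A t i j = if i ∈ N j then (1:ℝ)/(N j).card else 0 := hform i j
      rw [he] at hne ⊢
      by_cases hmem : i ∈ N j
      · rw [if_pos hmem]
        have hcard1 : 0 < (N j).card := Finset.card_pos.mpr ⟨j, hself j⟩
        have hcardn : (N j).card ≤ n := by
          simpa [Finset.card_univ] using Finset.card_le_univ (N j)
        have h1' : (0:ℝ) < (N j).card := by exact_mod_cast hcard1
        have h2' : ((N j).card : ℝ) ≤ n := by exact_mod_cast hcardn
        exact one_div_le_one_div_of_le h1' h2'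
      · exact absurd (if_neg hmem) hne
    have hdiag : ∀ t j, 0 < A t j j := by
      intro t j
      obtain ⟨N, hself, hform⟩ := hOD t ω
      have he : A t j j = if j ∈ N j then (1:ℝ)/(N j).card else 0 := hform j j
      rw [he, if_pos (hself j)]
      have hcard1 : 0 < (N j).card := Finset.card_pos.mpr ⟨j, hself j⟩
      positivity
    have h3' : ∀ t : ℕ, ∃ t', t ≤ t' ∧ ∀ i, δ ≤ pushFrom A 0 (fun _ => 1) t' i := by
      intro t
      obtain ⟨t', ht1, ht2⟩ := h3 t
      exact ⟨t', ht1, fun i => by rw [← pushIter_eq_pushFrom]; exact ht2 i⟩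
    have hconv := main_det hn hnn hcol hlow hdiag h1 h2 hδ h3' x0 i
    simpa only [← pushIter_eq_pushFrom] using hconv
  filter_upwards [hflow, hsum, hy] with ω h1 h2 h3
  exact key ω h1 h2 h3
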